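/- Define g(λ,w) = e^λ B(λ+w) - e^λ B(λ) - B(w) + 1 - w(e^λ - 1), where B(w) = w/(1-e^{-w}) for w ≠ 0 and B(0)=1. Then g(λ,w) ≤ 0 for all λ ≥ 0 and w ≥ 0. -/

import Mathlib

noncomputable def B : ℝ → ℝ := fun w => if w = 0 then 1 else w / (1 - Real.exp (-w))

lemma aux_tanh_le (x : ℝ) (hx : 0 ≤ x) : 2 * (Real.exp x - 1) ≤ x * (Real.exp x + 1) := by
  have h : ∀ y : ℝ, HasDerivAt (fun t => t * (Real.exp t + 1) - 2 * (Real.exp t - 1))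
      ((y - 1) * Real.exp y + 1) y := by
    intro y
    have h1 : HasDerivAt (fun t : ℝ => t * (Real.exp t + 1))
        (1 * (Real.exp y + 1) + y * Real.exp y) y :=
      (hasDerivAt_id y).mul ((Real.hasDerivAt_exp y).add_const 1)
    have h2 : HasDerivAt (fun t : ℝ => 2 * (Real.exp t - 1)) (2 * Real.exp y) y :=
      ((Real.hasDerivAt_exp y).sub_const 1).const_mul 2
    exact (h1.sub h2).congr_deriv (by ring)
  have hmono : MonotoneOn (fun t => t * (Real.exp t + 1) - 2 * (Real.exp t - 1)) (Set.Ici 0) := by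
    apply monotoneOn_of_deriv_nonneg (convex_Ici 0)
    · exact Continuous.continuousOn (by continuity)
    · intro y _
      exact (h y).differentiableAt.differentiableWithinAt
    · intro y hy
      rw [(h y).deriv]
      have h1 := Real.add_one_le_exp (-y)
      have h2 : Real.exp (-y) * Real.exp y = 1 := by rw [← Real.exp_add]; simp
      nlinarith [Real.exp_pos y]
  have := hmono (Set.self_mem_Ici) (Set.mem_Ici.mpr hx) hx
  simp at this
  linarith

theorem gB_nonpos (lam w : ℝ) (hlam : 0 ≤ lam) (hw : 0 ≤ w) :
    Real.exp lam * B (lam + w) - Real.exp lam * B lam - B w + 1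
      - w * (Real.exp lam - 1) ≤ 0 := by
  rcases eq_or_lt_of_le hlam with h0 | hlam'
  · simp [← h0, B]
  rcases eq_or_lt_of_le hw with h0 | hw'
  · simp [← h0, B]
  set a := Real.exp lam with ha
  set b := Real.exp w with hb
  have ha1 : 1 < a := by rw [ha]; exact Real.one_lt_exp_iff.mpr hlam'
  have hb1 : 1 < b := by rw [hb]; exact Real.one_lt_exp_iff.mpr hw'
  have hab : Real.exp (lam + w) = a * b := Real.exp_add lam w
  have hab1 : 1 < a * b := by nlinarith
  have hBlw : B (lam + w) = (lam + w) * (a * b) / (a * b - 1) := by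
    unfold B
    rw [if_neg (by positivity), Real.exp_neg, hab, inv_eq_one_div]
    field_simp
  have hBl : B lam = lam * a / (a - 1) := by
    unfold B
    rw [if_neg (ne_of_gt hlam'), Real.exp_neg, ← ha, inv_eq_one_div]
    field_simp
  have hBw : B w = w * b / (b - 1) := by
    unfold B
    rw [if_neg (ne_of_gt hw'), Real.exp_neg, ← hb, inv_eq_one_div]
    field_simp
  rw [hBlw, hBl, hBw]
  have hkl : 2 * (a - 1) ≤ lam * (a + 1) := by
    have := aux_tanh_le lam hlam; rw [← ha] at this; linarith
  have hkw : 2 * (b - 1) ≤ w * (b + 1) := by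
    have := aux_tanh_le w hw; rw [← hb] at this; linarith
  have hd1 : (0:ℝ) < a * b - 1 := by linarith
  have hd2 : (0:ℝ) < a - 1 := by linarith
  have hd3 : (0:ℝ) < b - 1 := by linarith
  have hident : a * ((lam + w) * (a * b) / (a * b - 1)) - a * (lam * a / (a - 1))
      - w * b / (b - 1) + 1 - w * (a - 1)
      = ((a*b-1)*(a-1)*(b-1) - a^2*lam*(b-1)^2 - w*(a-1)^2) / ((a*b-1)*(a-1)*(b-1)) := by
    field_simp
    ring
  rw [hident]
  apply div_nonpos_of_nonpos_of_nonneg _ (by positivity)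
  have h1 : 2*(a-1) * (a^2*(b-1)^2*(b+1)) ≤ lam*(a+1) * (a^2*(b-1)^2*(b+1)) :=
    mul_le_mul_of_nonneg_right hkl (by positivity)
  have h2 : 2*(b-1) * ((a-1)^2*(a+1)) ≤ w*(b+1) * ((a-1)^2*(a+1)) :=
    mul_le_mul_of_nonneg_right hkw (by positivity)
  have h3 : (0:ℝ) ≤ (a-1)^2*(b-1)^2*(a*b-1) := by positivity
  have key2 : ((a*b-1)*(a-1)*(b-1) - a^2*lam*(b-1)^2 - w*(a-1)^2) * ((a+1)*(b+1)) ≤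
      0 * ((a+1)*(b+1)) := by nlinarith [h1, h2, h3]
  have hpos : (0:ℝ) < (a+1)*(b+1) := by positivity
  linarith [(mul_le_mul_iff_of_pos_right hpos).mp key2]
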